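/- In the two-group imitation game induced by an $M$-Lipschitz map $f : [0,1]^m \to [0,1]^m$ with action grids $\{0, 1/k, \dots, 1\}$ (player $(i,1)$ gets $-|a_i - b_i|^2$, player $(i,2)$ gets $-|f_i(\mathbf{a}) - b_i|^2$), every pure Nash equilibrium and more generally every $\frac{3}{4k^2}$-well-supported Nash equilibrium yields a point $\alpha \in ([0,1])^m$ with grid coordinates such that $\|\alpha - f(\alpha)\|_\infty \leq \frac{3+M}{k}$. -/

import Mathlib

lemma keyAlg {ι : Type*} [Fintype ι] (w v : ι → ℝ) (h1 : ∑ i, w i = 1) (x x' : ℝ) :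
    (∑ i, w i * (-(x - v i) ^ 2)) - (∑ i, w i * (-(x' - v i) ^ 2)) =
      (x' - ∑ i, w i * v i) ^ 2 - (x - ∑ i, w i * v i) ^ 2 := by
  have h : ∀ i : ι, w i * (-(x - v i) ^ 2) - w i * (-(x' - v i) ^ 2) =
      (x' ^ 2 - x ^ 2) * w i + (2 * (x - x')) * (w i * v i) := fun i => by ring
  calc (∑ i, w i * (-(x - v i) ^ 2)) - (∑ i, w i * (-(x' - v i) ^ 2))
      = ∑ i, ((x' ^ 2 - x ^ 2) * w i + (2 * (x - x')) * (w i * v i)) := by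
        rw [← Finset.sum_sub_distrib]; exact Finset.sum_congr rfl fun i _ => h i
    _ = (x' ^ 2 - x ^ 2) * (∑ i, w i) + (2 * (x - x')) * (∑ i, w i * v i) := by
        rw [Finset.sum_add_distrib, ← Finset.mul_sum, ← Finset.mul_sum]
    _ = _ := by rw [h1]; ring

lemma nearestGrid (k : ℕ) (hk : 1 ≤ k) (μ : ℝ) (h0 : 0 ≤ μ) (h1 : μ ≤ 1) :
    ∃ j : Fin (k + 1), ((j : ℝ) / k - μ) ^ 2 ≤ 1 / (4 * (k : ℝ) ^ 2) := by
  have hk' : (1 : ℝ) ≤ k := by exact_mod_cast hk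
  have hkpos : (0 : ℝ) < k := by linarith
  set n : ℤ := round ((k : ℝ) * μ) with hn
  have habs : |(k : ℝ) * μ - n| ≤ 1 / 2 := abs_sub_round _
  rw [abs_le] at habs
  have hn0 : (0 : ℤ) ≤ n := by
    have h : (-1 : ℝ) < (n : ℝ) := by nlinarith
    have : (-1 : ℤ) < n := by exact_mod_cast h
    omega
  have hnk : n ≤ (k : ℤ) := by
    have h : (n : ℝ) < (k : ℝ) + 1 := by nlinarith
    have : n < (k : ℤ) + 1 := by exact_mod_cast h
    omega
  refine ⟨⟨n.toNat, by omega⟩, ?_⟩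
  have hcast : ((n.toNat : ℕ) : ℝ) = (n : ℝ) := by
    exact_mod_cast Int.toNat_of_nonneg hn0
  show ((n.toNat : ℝ) / k - μ) ^ 2 ≤ 1 / (4 * (k : ℝ) ^ 2)
  rw [hcast]
  have hexp : ((n : ℝ) / k - μ) = ((n : ℝ) - k * μ) / k := by field_simp
  rw [hexp, div_pow]
  rw [div_le_div_iff₀ (by positivity) (by positivity)]
  have t2 : ((n : ℝ) - k * μ) ^ 2 ≤ 1 / 4 := by nlinarith [habs.1, habs.2]
  nlinarith [mul_le_mul_of_nonneg_right t2 (show (0:ℝ) ≤ 4 * (k:ℝ)^2 by positivity)]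

lemma meanClose {ι : Type*} [Fintype ι] (w v : ι → ℝ) (c r : ℝ)
    (hw0 : ∀ i, 0 ≤ w i) (hw1 : ∑ i, w i = 1) (hr : 0 ≤ r)
    (h : ∀ i, 0 < w i → |v i - c| ≤ r) : |(∑ i, w i * v i) - c| ≤ r := by
  have he : (∑ i, w i * v i) - c = ∑ i, w i * (v i - c) := by
    calc (∑ i, w i * v i) - c = (∑ i, w i * v i) - (∑ i, w i) * c := by rw [hw1, one_mul]
      _ = ∑ i, (w i * v i - w i * c) := by rw [Finset.sum_sub_distrib, Finset.sum_mul]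
      _ = ∑ i, w i * (v i - c) := Finset.sum_congr rfl fun i _ => by ring
  rw [he]
  calc |∑ i, w i * (v i - c)| ≤ ∑ i, |w i * (v i - c)| := Finset.abs_sum_le_sum_abs _ _
    _ ≤ ∑ i, w i * r := by
        refine Finset.sum_le_sum fun i _ => ?_
        rcases eq_or_lt_of_le (hw0 i) with h0 | h0
        · simp [← h0]
        · rw [abs_mul, abs_of_pos h0]
          exact mul_le_mul_of_nonneg_left (h i h0) h0.le
    _ = r := by rw [← Finset.sum_mul, hw1, one_mul]

lemma supportClose {ι : Type*} [Fintype ι] (k : ℕ) (hk : 1 ≤ k) (w v : ι → ℝ)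
    (hw0 : ∀ i, 0 ≤ w i) (hw1 : ∑ i, w i = 1) (hv : ∀ i, v i ∈ Set.Icc (0:ℝ) 1) (x : ℝ)
    (hbr : ∀ j : Fin (k+1), (∑ i, w i * (-(x - v i) ^ 2)) ≥
      (∑ i, w i * (-((j:ℝ)/k - v i) ^ 2)) - 3/(4*(k:ℝ)^2)) :
    |x - ∑ i, w i * v i| ≤ 1/k := by
  have hk' : (1 : ℝ) ≤ k := by exact_mod_cast hk
  have hkpos : (0 : ℝ) < k := by linarith
  set μ := ∑ i, w i * v i with hμ
  have hμ0 : 0 ≤ μ := Finset.sum_nonneg fun i _ => mul_nonneg (hw0 i) (hv i).1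
  have hμ1 : μ ≤ 1 := by
    calc μ ≤ ∑ i, w i := Finset.sum_le_sum fun i _ => by nlinarith [(hv i).2, hw0 i, (hv i).1]
      _ = 1 := hw1
  obtain ⟨j, hj⟩ := nearestGrid k hk μ hμ0 hμ1
  have hkey := keyAlg w v hw1 x ((j:ℝ)/k)
  have hb := hbr j
  have heq : 1/(4*(k:ℝ)^2) + 3/(4*(k:ℝ)^2) = (1/(k:ℝ))^2 := by
    field_simp; norm_num
  have hsq : (x - μ)^2 ≤ (1/(k:ℝ))^2 := by
    have hdiff : ((j:ℝ)/k - μ)^2 - (x-μ)^2 ≥ -(3/(4*(k:ℝ)^2)) := by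
      rw [← hkey]; linarith
    linarith [hj]
  have hku : (0:ℝ) < 1/(k:ℝ) := by positivity
  rw [abs_le]
  constructor
  · nlinarith [hsq, sq_nonneg (x - μ + 1/(k:ℝ))]
  · nlinarith [hsq, sq_nonneg (x - μ - 1/(k:ℝ))]

/-- in the two-group imitation game induced by an `M`-Lipschitz (sup-norm)
map `f : [0,1]^m → [0,1]^m` on the grid `{0, 1/k, …, 1}` (player `(i,1)` plays `aᵢ` and gets
`-(aᵢ - bᵢ)²`, player `(i,2)` plays `bᵢ` and gets `-(fᵢ(a) - bᵢ)²`), every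
`3/(4k²)`-well-supported Nash equilibrium (in particular every pure Nash equilibrium)
yields a grid point `α` with `E[bᵢ] ∈ [αᵢ, αᵢ + 1/k]` and `‖α - f α‖∞ ≤ (3+M)/k`.
Action `j : Fin (k+1)` corresponds to the real value `j/k`. -/
theorem stmt15 (m : ℕ) (M : ℝ) (hM : 0 ≤ M) (k : ℕ) (hk : 1 ≤ k)
    (f : (Fin m → ℝ) → (Fin m → ℝ))
    (hrange : ∀ x, (∀ i, x i ∈ Set.Icc (0 : ℝ) 1) → ∀ i, f x i ∈ Set.Icc (0 : ℝ) 1)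
    (hLip : ∀ x y, (∀ i, x i ∈ Set.Icc (0 : ℝ) 1) → (∀ i, y i ∈ Set.Icc (0 : ℝ) 1) →
      ‖f x - f y‖ ≤ M * ‖x - y‖)
    (p q : Fin m → Fin (k + 1) → ℝ)
    (hp0 : ∀ i a, 0 ≤ p i a) (hp1 : ∀ i, ∑ a, p i a = 1)
    (hq0 : ∀ i b, 0 ≤ q i b) (hq1 : ∀ i, ∑ b, q i b = 1)
    (hWSNE1 : ∀ i (a : Fin (k + 1)), 0 < p i a → ∀ a' : Fin (k + 1),
      (∑ b, q i b * (-(((a : ℝ) / k) - ((b : ℝ) / k)) ^ 2)) ≥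
        (∑ b, q i b * (-(((a' : ℝ) / k) - ((b : ℝ) / k)) ^ 2)) - 3 / (4 * (k : ℝ) ^ 2))
    (hWSNE2 : ∀ i (b : Fin (k + 1)), 0 < q i b → ∀ b' : Fin (k + 1),
      (∑ a : Fin m → Fin (k + 1), (∏ j, p j (a j)) *
          (-(f (fun j => ((a j : ℝ) / k)) i - ((b : ℝ) / k)) ^ 2)) ≥
        (∑ a : Fin m → Fin (k + 1), (∏ j, p j (a j)) *
          (-(f (fun j => ((a j : ℝ) / k)) i - ((b' : ℝ) / k)) ^ 2)) - 3 / (4 * (k : ℝ) ^ 2)) :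
    ∃ α : Fin m → ℝ, (∀ i, ∃ j : Fin (k + 1), α i = (j : ℝ) / k) ∧
      (∀ i, (∑ b, q i b * ((b : ℝ) / k)) ∈ Set.Icc (α i) (α i + 1 / k)) ∧
      ‖α - f α‖ ≤ (3 + M) / k := by
  have hk' : (1 : ℝ) ≤ k := by exact_mod_cast hk
  have hkpos : (0 : ℝ) < k := by linarith
  -- grid values lie in [0,1]
  have hgrid01 : ∀ b : Fin (k + 1), ((b : ℝ) / k) ∈ Set.Icc (0 : ℝ) 1 := by
    intro b
    constructor
    · positivity
    · rw [div_le_one hkpos]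
      exact_mod_cast Nat.lt_succ_iff.mp b.isLt
  -- expectations of column player
  set β : Fin m → ℝ := fun i => ∑ b, q i b * ((b : ℝ) / k) with hβdef
  -- Lemma A: supported row actions are within 1/k of β i
  have hA : ∀ i (a : Fin (k + 1)), 0 < p i a → |(a : ℝ) / k - β i| ≤ 1 / k := by
    intro i a ha
    exact supportClose k hk (q i) (fun b => (b : ℝ) / k) (hq0 i) (hq1 i)
      (fun b => hgrid01 b) ((a : ℝ) / k) (fun j => hWSNE1 i a ha j)
  -- weights of product distribution
  set W : (Fin m → Fin (k + 1)) → ℝ := fun a => ∏ j, p j (a j) with hWdef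
  have hW0 : ∀ a, 0 ≤ W a := fun a => Finset.prod_nonneg fun j _ => hp0 j (a j)
  have hW1 : ∑ a : Fin m → Fin (k + 1), W a = 1 := by
    rw [hWdef]
    rw [← Fintype.piFinset_univ, ← Finset.prod_univ_sum]
    simp [hp1]
  set v : Fin m → (Fin m → Fin (k + 1)) → ℝ :=
    fun i a => f (fun j => ((a j : ℝ) / k)) i with hvdef
  have hv01 : ∀ i a, v i a ∈ Set.Icc (0 : ℝ) 1 := by
    intro i a
    exact hrange _ (fun j => hgrid01 (a j)) i
  set γ : Fin m → ℝ := fun i => ∑ a, W a * v i a with hγdef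
  -- Lemma B: supported column actions are within 1/k of γ i
  have hB : ∀ i (b : Fin (k + 1)), 0 < q i b → |(b : ℝ) / k - γ i| ≤ 1 / k := by
    intro i b hb
    have hconv : ∀ y : ℝ, (∑ a : Fin m → Fin (k + 1), W a * (-(v i a - y) ^ 2)) =
        ∑ a : Fin m → Fin (k + 1), W a * (-(y - v i a) ^ 2) :=
      fun y => Finset.sum_congr rfl fun a _ => by ring
    refine supportClose k hk W (v i) hW0 hW1 (hv01 i) ((b : ℝ) / k) (fun j => ?_)
    have := hWSNE2 i b hb j
    rw [hconv, hconv] at this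
    exact this
  -- β i ∈ [0, 1]
  have hβ0 : ∀ i, 0 ≤ β i :=
    fun i => Finset.sum_nonneg fun b _ => mul_nonneg (hq0 i b) (hgrid01 b).1
  have hβ1 : ∀ i, β i ≤ 1 := by
    intro i
    calc β i ≤ ∑ b, q i b :=
          Finset.sum_le_sum fun b _ => by nlinarith [(hgrid01 b).2, hq0 i b, (hgrid01 b).1]
      _ = 1 := hq1 i
  -- |β i - γ i| ≤ 1/k
  have hβγ : ∀ i, |β i - γ i| ≤ 1 / k :=
    fun i => meanClose (q i) (fun b => (b : ℝ) / k) (γ i) (1 / k) (hq0 i) (hq1 i)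
      (by positivity) (fun b hb => hB i b hb)
  -- define α via floors
  set n : Fin m → ℤ := fun i => ⌊(k : ℝ) * β i⌋ with hndef
  have hn0 : ∀ i, 0 ≤ n i := fun i => Int.floor_nonneg.mpr (mul_nonneg hkpos.le (hβ0 i))
  have hnk : ∀ i, n i ≤ (k : ℤ) := by
    intro i
    have h1 : (k : ℝ) * β i ≤ (k : ℝ) := by nlinarith [hβ1 i]
    calc n i ≤ ⌊(k : ℝ)⌋ := Int.floor_le_floor h1
      _ = (k : ℤ) := by exact_mod_cast Int.floor_natCast k
  set α : Fin m → ℝ := fun i => (((n i).toNat : ℕ) : ℝ) / k with hαdef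
  have hcastn : ∀ i, (((n i).toNat : ℕ) : ℝ) = ((n i : ℤ) : ℝ) :=
    fun i => by exact_mod_cast Int.toNat_of_nonneg (hn0 i)
  have hfl : ∀ i, ((n i : ℤ) : ℝ) ≤ (k : ℝ) * β i := fun i => Int.floor_le _
  have hfu : ∀ i, (k : ℝ) * β i < ((n i : ℤ) : ℝ) + 1 := fun i => Int.lt_floor_add_one _
  -- Icc membership
  have hIccl : ∀ i, α i ≤ β i := by
    intro i
    rw [hαdef]
    simp only
    rw [hcastn i, div_le_iff₀ hkpos]
    nlinarith [hfl i]
  have hIccu : ∀ i, β i ≤ α i + 1 / k := by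
    intro i
    rw [hαdef]
    simp only
    rw [hcastn i]
    rw [← add_div, le_div_iff₀ hkpos] at *
    nlinarith [hfu i]
  have hα01 : ∀ i, α i ∈ Set.Icc (0 : ℝ) 1 := by
    intro i
    constructor
    · rw [hαdef]; positivity
    · rw [hαdef]; simp only
      rw [hcastn i, div_le_one hkpos]
      exact_mod_cast hnk i
  -- Claim C: supported row actions are within 1/k of α i
  have hC : ∀ i (a : Fin (k + 1)), 0 < p i a → |(a : ℝ) / k - α i| ≤ 1 / k := by
    intro i a ha
    have hA' := hA i a ha
    rw [abs_le] at hA'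
    have e1 : (((a : ℕ) : ℝ) / k - β i) * k = ((a : ℕ) : ℝ) - k * β i := by
      field_simp
    have e2 : (1 / (k : ℝ)) * k = 1 := by field_simp
    have hup : ((a : ℕ) : ℝ) ≤ (k : ℝ) * β i + 1 := by
      have h2 := mul_le_mul_of_nonneg_right hA'.2 hkpos.le
      rw [e1, e2] at h2; linarith
    have hlo : (k : ℝ) * β i - 1 ≤ ((a : ℕ) : ℝ) := by
      have h1 := mul_le_mul_of_nonneg_right hA'.1 hkpos.le
      rw [e1] at h1
      have e3 : -(1 / (k : ℝ)) * k = -1 := by field_simp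
      rw [e3] at h1; linarith
    have hupZ : ((a : ℕ) : ℤ) ≤ n i + 1 := by
      have : ((a : ℕ) : ℝ) < ((n i : ℤ) : ℝ) + 2 := by linarith [hfu i]
      have h3 : ((a : ℕ) : ℤ) < n i + 2 := by exact_mod_cast this
      omega
    have hloZ : n i - 1 ≤ ((a : ℕ) : ℤ) := by
      have : ((n i : ℤ) : ℝ) - 1 ≤ ((a : ℕ) : ℝ) := by linarith [hfl i]
      exact_mod_cast this
    have hupR : ((a : ℕ) : ℝ) ≤ ((n i : ℤ) : ℝ) + 1 := by exact_mod_cast hupZ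
    have hloR : ((n i : ℤ) : ℝ) - 1 ≤ ((a : ℕ) : ℝ) := by exact_mod_cast hloZ
    rw [hαdef]
    simp only
    rw [hcastn i]
    have e4 : ((a : ℕ) : ℝ) / k - ((n i : ℤ) : ℝ) / k = (((a : ℕ) : ℝ) - ((n i : ℤ) : ℝ)) / k := by
      ring
    rw [e4, abs_div, abs_of_pos hkpos]
    rw [div_le_div_iff₀ hkpos hkpos]
    have habs2 : |((a : ℕ) : ℝ) - ((n i : ℤ) : ℝ)| ≤ 1 := abs_le.mpr ⟨by linarith, by linarith⟩
    nlinarith [habs2]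
  -- Lipschitz bound on supported profiles
  have hLipSup : ∀ i (a : Fin m → Fin (k + 1)), 0 < W a → |v i a - f α i| ≤ M / k := by
    intro i a hWa
    have hpa : ∀ j, 0 < p j (a j) := by
      intro j
      rcases eq_or_lt_of_le (hp0 j (a j)) with h0 | h0
      · exfalso
        have : W a = 0 := Finset.prod_eq_zero (Finset.mem_univ j) h0.symm
        rw [this] at hWa; exact lt_irrefl 0 hWa
      · exact h0
    set x : Fin m → ℝ := fun j => ((a j : ℝ) / k) with hxdef
    have hx01 : ∀ j, x j ∈ Set.Icc (0 : ℝ) 1 := fun j => hgrid01 (a j)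
    have hnorm : ‖x - α‖ ≤ 1 / k := by
      refine (pi_norm_le_iff_of_nonneg (by positivity)).mpr fun j => ?_
      rw [Pi.sub_apply, Real.norm_eq_abs]
      exact hC j (a j) (hpa j)
    have hL := hLip x α hx01 hα01
    have hL2 : ‖f x - f α‖ ≤ M / k := by
      calc ‖f x - f α‖ ≤ M * ‖x - α‖ := hL
        _ ≤ M * (1 / k) := mul_le_mul_of_nonneg_left hnorm hM
        _ = M / k := by ring
    calc |v i a - f α i| = ‖(f x - f α) i‖ := by rw [Pi.sub_apply, Real.norm_eq_abs]
      _ ≤ ‖f x - f α‖ := norm_le_pi_norm _ i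
      _ ≤ M / k := hL2
  -- |γ i - f α i| ≤ M/k
  have hγf : ∀ i, |γ i - f α i| ≤ M / k :=
    fun i => meanClose W (v i) (f α i) (M / k) hW0 hW1 (by positivity)
      (fun a ha => hLipSup i a ha)
  -- conclude
  refine ⟨α, ?_, ?_, ?_⟩
  · intro i
    refine ⟨⟨(n i).toNat, ?_⟩, rfl⟩
    have h0 := hn0 i; have h1 := hnk i
    omega
  · exact fun i => ⟨hIccl i, hIccu i⟩
  · have hcoord : ∀ i, |α i - f α i| ≤ (3 + M) / k := by
      intro i
      have hk1nn : (0:ℝ) ≤ 1 / (k:ℝ) := by positivity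
      have t1 : |α i - β i| ≤ 1 / k := by
        rw [abs_le]; constructor
        · linarith [hIccu i]
        · linarith [hIccl i]
      have t2 := hβγ i
      have t3 := hγf i
      rw [abs_le] at t1 t2 t3 ⊢
      have hsplit : (3 + M) / (k : ℝ) = 1 / k + 1 / k + 1 / k + M / k := by ring
      constructor
      · rw [hsplit]
        have := t1.1; have := t2.1; have := t3.1
        linarith
      · rw [hsplit]
        have := t1.2; have := t2.2; have := t3.2
        linarith
    have hfinnn : (0:ℝ) ≤ (3 + M) / (k : ℝ) := div_nonneg (by linarith) hkpos.le
    refine (pi_norm_le_iff_of_nonneg hfinnn).mpr fun i => ?_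
    rw [Pi.sub_apply, Real.norm_eq_abs]
    exact hcoord i
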